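/- Let q be a real number with 0 < q < 1, and for each m ∈ ℕ set τ_m := ∑_{k=0}^{m} binom_q(m,k) (that is, τ_m = (1 ⊕_q 1)^m). Then for every complex x with |x| < 1/(1−q), the series sin_q(x(1 ⊕_q 1)) := ∑_{n=0}^{∞} (−1)^n τ_{2n+1} x^{2n+1}/[2n+1]_q! converges and 2·sin_q(x)·cos_q(x) = sin_q(x(1 ⊕_q 1)). -/

import Mathlib

open Filter Topology

/-- The `q`-basic number `[n]_q = (1 - q^n)/(1 - q)`. -/
noncomputable def qNum (q : ℝ) (n : ℕ) : ℝ := (1 - q ^ n) / (1 - q)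

/-- The `q`-factorial `[n]_q! = [1]_q [2]_q ⋯ [n]_q`, with `[0]_q! = 1`. -/
noncomputable def qFact (q : ℝ) (n : ℕ) : ℝ := ∏ j ∈ Finset.range n, qNum q (j + 1)

/-- The Gaussian binomial coefficient `[n]_q! / ([k]_q! [n-k]_q!)`. -/
noncomputable def qBinom (q : ℝ) (n k : ℕ) : ℝ := qFact q n / (qFact q k * qFact q (n - k))

/-- The `q`-exponential `e_q(z) = ∑ z^n / [n]_q!`. -/
noncomputable def qExp (q : ℝ) (z : ℂ) : ℂ := ∑' n : ℕ, z ^ n / (qFact q n : ℂ)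

/-- The `q`-sine `sin_q(z) = ∑ (-1)^n z^(2n+1) / [2n+1]_q!`. -/
noncomputable def qSin (q : ℝ) (z : ℂ) : ℂ :=
  ∑' n : ℕ, (-1 : ℂ) ^ n * z ^ (2 * n + 1) / (qFact q (2 * n + 1) : ℂ)

/-- The `q`-cosine `cos_q(z) = ∑ (-1)^n z^(2n) / [2n]_q!`. -/
noncomputable def qCos (q : ℝ) (z : ℂ) : ℂ :=
  ∑' n : ℕ, (-1 : ℂ) ^ n * z ^ (2 * n) / (qFact q (2 * n) : ℂ)

/-- The `q`-addition power `(x ⊕_q y)^n = ∑_{k=0}^n binom_q(n,k) x^k y^(n-k)`. -/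
noncomputable def qAddPow (q : ℝ) (x y : ℂ) (n : ℕ) : ℂ :=
  ∑ k ∈ Finset.range (n + 1), (qBinom q n k : ℂ) * x ^ k * y ^ (n - k)

/-- The `q`-subtraction power `(x ⊖_q y)^n = ∑_{k=0}^n binom_q(n,k) (-1)^(n-k) x^k y^(n-k)`. -/
noncomputable def qSubPow (q : ℝ) (x y : ℂ) (n : ℕ) : ℂ :=
  ∑ k ∈ Finset.range (n + 1), (qBinom q n k : ℂ) * (-1 : ℂ) ^ (n - k) * x ^ k * y ^ (n - k)

/-- The `q`-tangent `tan_q(z) = sin_q(z)/cos_q(z)`. -/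
noncomputable def qTan (q : ℝ) (z : ℂ) : ℂ := qSin q z / qCos q z

/-- The second `q`-exponential `E_q(z) = ∑ q^(n(n-1)/2) z^n / [n]_q!`. -/
noncomputable def qExpE (q : ℝ) (z : ℂ) : ℂ :=
  ∑' n : ℕ, (q : ℂ) ^ (n * (n - 1) / 2) * z ^ n / (qFact q n : ℂ)

private lemma qFact_pos' {q : ℝ} (hq0 : 0 < q) (hq1 : q < 1) (n : ℕ) : 0 < qFact q n := by
  unfold qFact qNum
  apply Finset.prod_pos
  intro j _
  have h1 : q ^ (j + 1) < 1 := pow_lt_one₀ hq0.le hq1 (Nat.succ_ne_zero j)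
  exact div_pos (by linarith) (by linarith)

private lemma qFact_succ (q : ℝ) (n : ℕ) : qFact q (n + 1) = qFact q n * qNum q (n + 1) :=
  Finset.prod_range_succ _ _

/-- Majorant series is summable. -/
private lemma aux_summable {q : ℝ} (hq0 : 0 < q) (hq1 : q < 1) (x : ℂ)
    (hx : ‖x‖ < 1 / (1 - q)) :
    Summable (fun n : ℕ => ‖x‖ ^ n / qFact q n) := by
  have hq2 : (0:ℝ) < 1 - q := by linarith
  rcases eq_or_ne x 0 with rfl | hx0
  · apply summable_of_ne_finset_zero (s := ({0} : Finset ℕ))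
    intro n hn
    simp only [Finset.mem_singleton] at hn
    simp [zero_pow hn]
  · have hxpos : 0 < ‖x‖ := norm_pos_iff.mpr hx0
    apply summable_of_ratio_test_tendsto_lt_one (l := ‖x‖ * (1 - q))
    · have := (lt_div_iff₀ hq2).mp hx
      linarith
    · filter_upwards with n
      have := qFact_pos' hq0 hq1 n
      positivity
    · have h0 : Tendsto (fun n : ℕ => 1 - q ^ (n+1)) atTop (𝓝 1) := by
        have h' : Tendsto (fun n : ℕ => q ^ (n+1)) atTop (𝓝 0) := by
          simpa [Function.comp_def] using (tendsto_pow_atTop_nhds_zero_of_lt_one hq0.le hq1).comp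
            (tendsto_add_atTop_nat 1)
        simpa using (tendsto_const_nhds (x := (1:ℝ))).sub h'
      have hlim : Tendsto (fun n : ℕ => ‖x‖ * (1-q) / (1 - q ^ (n+1))) atTop
          (𝓝 (‖x‖ * (1-q))) := by
        simpa [Pi.div_def] using (tendsto_const_nhds (x := ‖x‖ * (1-q))).div h0 one_ne_zero
      apply hlim.congr
      intro n
      have hFn := qFact_pos' hq0 hq1 n
      have hFn1 := qFact_pos' hq0 hq1 (n+1)
      have hqn : q ^ (n+1) < 1 := pow_lt_one₀ hq0.le hq1 (Nat.succ_ne_zero n)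
      have hterm : (0:ℝ) < ‖x‖ ^ n / qFact q n := by positivity
      have hterm1 : (0:ℝ) < ‖x‖ ^ (n+1) / qFact q (n+1) := by positivity
      rw [Real.norm_of_nonneg hterm1.le, Real.norm_of_nonneg hterm.le,
        div_div_div_comm, qFact_succ, pow_succ (‖x‖) n,
        mul_div_cancel_left₀ _ (pow_ne_zero n hxpos.ne'),
        mul_div_cancel_left₀ _ hFn.ne']
      unfold qNum
      rw [div_div_eq_mul_div]

private noncomputable def fAux (q : ℝ) (x : ℂ) (k : ℕ) : ℂ :=
  if Odd k then (-1:ℂ)^(k/2) * x^k / (qFact q k : ℂ) else 0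

private noncomputable def gAux (q : ℝ) (x : ℂ) (k : ℕ) : ℂ :=
  if Even k then (-1:ℂ)^(k/2) * x^k / (qFact q k : ℂ) else 0

private lemma norm_aux {q : ℝ} (hq0 : 0 < q) (hq1 : q < 1) (x : ℂ) (k : ℕ) :
    ‖(-1:ℂ)^(k/2) * x^k / (qFact q k : ℂ)‖ = ‖x‖ ^ k / qFact q k := by
  rw [norm_div, norm_mul, norm_pow, norm_neg, norm_one, one_pow, one_mul, norm_pow,
    Complex.norm_real, Real.norm_of_nonneg (qFact_pos' hq0 hq1 k).le]

private lemma fAux_norm_summable {q : ℝ} (hq0 : 0 < q) (hq1 : q < 1) (x : ℂ)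
    (hx : ‖x‖ < 1 / (1 - q)) : Summable (fun k => ‖fAux q x k‖) := by
  apply Summable.of_nonneg_of_le (fun k => norm_nonneg _) _ (aux_summable hq0 hq1 x hx)
  intro k
  unfold fAux
  split
  · exact le_of_eq (norm_aux hq0 hq1 x k)
  · have := qFact_pos' hq0 hq1 k
    simp only [norm_zero]
    positivity

private lemma gAux_norm_summable {q : ℝ} (hq0 : 0 < q) (hq1 : q < 1) (x : ℂ)
    (hx : ‖x‖ < 1 / (1 - q)) : Summable (fun k => ‖gAux q x k‖) := by
  apply Summable.of_nonneg_of_le (fun k => norm_nonneg _) _ (aux_summable hq0 hq1 x hx)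
  intro k
  unfold gAux
  split
  · exact le_of_eq (norm_aux hq0 hq1 x k)
  · have := qFact_pos' hq0 hq1 k
    simp only [norm_zero]
    positivity

private lemma odd_inj : Function.Injective (fun n : ℕ => 2 * n + 1) := by
  intro a b h
  have h' : 2 * a + 1 = 2 * b + 1 := h
  omega

private lemma even_inj : Function.Injective (fun n : ℕ => 2 * n) := by
  intro a b h
  have h' : 2 * a = 2 * b := h
  omega

private lemma fAux_supp (q : ℝ) (x : ℂ) :
    Function.support (fAux q x) ⊆ Set.range (fun n : ℕ => 2 * n + 1) := by
  intro k hk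
  rcases Nat.even_or_odd k with he | ho
  · exfalso
    apply hk
    have hne : ¬ Odd k := by rw [Nat.odd_iff]; have := Nat.even_iff.mp he; omega
    unfold fAux
    rw [if_neg hne]
  · obtain ⟨m, hm⟩ := ho
    exact ⟨m, show 2 * m + 1 = k by omega⟩

private lemma gAux_supp (q : ℝ) (x : ℂ) :
    Function.support (gAux q x) ⊆ Set.range (fun n : ℕ => 2 * n) := by
  intro k hk
  rcases Nat.even_or_odd k with he | ho
  · obtain ⟨m, hm⟩ := he
    exact ⟨m, show 2 * m = k by omega⟩
  · exfalso
    apply hk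
    have hne : ¬ Even k := by rw [Nat.even_iff]; have := Nat.odd_iff.mp ho; omega
    unfold gAux
    rw [if_neg hne]

private lemma qSin_eq (q : ℝ) (x : ℂ) : qSin q x = ∑' k, fAux q x k := by
  rw [qSin, ← odd_inj.tsum_eq (fAux_supp q x)]
  apply tsum_congr
  intro n
  have h2 : (2 * n + 1) / 2 = n := by omega
  show (-1:ℂ)^n * x^(2*n+1) / (qFact q (2*n+1) : ℂ) = fAux q x (2*n+1)
  unfold fAux
  rw [if_pos (Nat.odd_iff.mpr (by omega)), h2]

private lemma qCos_eq (q : ℝ) (x : ℂ) : qCos q x = ∑' k, gAux q x k := by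
  rw [qCos, ← even_inj.tsum_eq (gAux_supp q x)]
  apply tsum_congr
  intro n
  have h2 : (2 * n) / 2 = n := by omega
  show (-1:ℂ)^n * x^(2*n) / (qFact q (2*n) : ℂ) = gAux q x (2*n)
  unfold gAux
  rw [if_pos (Nat.even_iff.mpr (by omega)), h2]

/-- Core algebraic identity for a single cross term. -/
private lemma term_eq {q : ℝ} (hq0 : 0 < q) (hq1 : q < 1) (x : ℂ) {N i : ℕ}
    (hi : i ≤ 2*N+1) (hodd : Odd i) :
    ((-1:ℂ)^(i/2) * x^i / (qFact q i : ℂ)) *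
      ((-1:ℂ)^((2*N+1-i)/2) * x^(2*N+1-i) / (qFact q (2*N+1-i) : ℂ))
      = (-1:ℂ)^N * (qBinom q (2*N+1) i : ℂ) * x^(2*N+1) / (qFact q (2*N+1) : ℂ) := by
  have hFi := qFact_pos' hq0 hq1 i
  have hFj := qFact_pos' hq0 hq1 (2*N+1-i)
  have hFn := qFact_pos' hq0 hq1 (2*N+1)
  have h1 : (qFact q i : ℂ) ≠ 0 := by exact_mod_cast hFi.ne'
  have h2 : (qFact q (2*N+1-i) : ℂ) ≠ 0 := by exact_mod_cast hFj.ne'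
  have h3 : (qFact q (2*N+1) : ℂ) ≠ 0 := by exact_mod_cast hFn.ne'
  have hio := Nat.odd_iff.mp hodd
  have hsign : ((-1:ℂ))^(i/2) * (-1:ℂ)^((2*N+1-i)/2) = (-1:ℂ)^N := by
    rw [← pow_add]
    congr 1
    omega
  have hxp : x^i * x^(2*N+1-i) = x^(2*N+1) := by
    rw [← pow_add]
    congr 1
    omega
  have hB : qBinom q (2*N+1) i * (qFact q i * qFact q (2*N+1-i)) = qFact q (2*N+1) := by
    rw [qBinom]
    exact div_mul_cancel₀ _ (mul_pos hFi hFj).ne'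
  have hBc : (qBinom q (2*N+1) i : ℂ) * ((qFact q i : ℂ) * (qFact q (2*N+1-i) : ℂ))
      = (qFact q (2*N+1) : ℂ) := by exact_mod_cast hB
  rw [div_mul_div_comm, mul_mul_mul_comm, hsign, hxp,
    div_eq_div_iff (mul_ne_zero h1 h2) h3]
  linear_combination ((-1:ℂ)^N * x^(2*N+1)) * hBc.symm

private lemma qBinom_symm {q : ℝ} {n i : ℕ} (hi : i ≤ n) :
    qBinom q n (n - i) = qBinom q n i := by
  rw [qBinom, qBinom, Nat.sub_sub_self hi, mul_comm]

/-- `2 sin_q(x) cos_q(x) = sin_q(x (1 ⊕_q 1))`, where the right-hand series is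
`∑ (-1)^n (1 ⊕_q 1)^{2n+1} x^{2n+1} / [2n+1]_q!`. -/
theorem two_qSin_qCos (q : ℝ) (hq0 : 0 < q) (hq1 : q < 1) (x : ℂ)
    (hx : ‖x‖ < 1 / (1 - q)) :
    HasSum
      (fun n : ℕ =>
        (-1 : ℂ) ^ n * qAddPow q 1 1 (2 * n + 1) * x ^ (2 * n + 1) / (qFact q (2 * n + 1) : ℂ))
      (2 * qSin q x * qCos q x) := by
  have hfn := fAux_norm_summable hq0 hq1 x hx
  have hgn := gAux_norm_summable hq0 hq1 x hx
  have hprod : qSin q x * qCos q x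
      = ∑' n, ∑ kl ∈ Finset.HasAntidiagonal.antidiagonal n, fAux q x kl.1 * gAux q x kl.2 := by
    rw [qSin_eq, qCos_eq]
    exact tsum_mul_tsum_eq_tsum_sum_antidiagonal_of_summable_norm hfn hgn
  have hFsummable : Summable (fun n => ∑ kl ∈ Finset.HasAntidiagonal.antidiagonal n, fAux q x kl.1 * gAux q x kl.2) :=
    (summable_norm_sum_mul_antidiagonal_of_summable_norm hfn hgn).of_norm
  have hFeven : ∀ k, Even k →
      ∑ kl ∈ Finset.HasAntidiagonal.antidiagonal k, fAux q x kl.1 * gAux q x kl.2 = 0 := by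
    intro k hk
    rw [Finset.Nat.sum_antidiagonal_eq_sum_range_succ_mk]
    apply Finset.sum_eq_zero
    intro i hi
    simp only [Finset.mem_range] at hi
    have hk2 := Nat.even_iff.mp hk
    rcases Nat.even_or_odd i with he | ho
    · have hne : ¬ Odd i := by rw [Nat.odd_iff]; have := Nat.even_iff.mp he; omega
      have e1 : fAux q x i = 0 := by unfold fAux; rw [if_neg hne]
      rw [e1, zero_mul]
    · have hi2 := Nat.odd_iff.mp ho
      have hne : ¬ Even (k - i) := by rw [Nat.even_iff]; omega
      have e1 : gAux q x (k - i) = 0 := by unfold gAux; rw [if_neg hne]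
      rw [e1, mul_zero]
  have hFodd : ∀ N : ℕ, 2 * ∑ kl ∈ Finset.HasAntidiagonal.antidiagonal (2*N+1), fAux q x kl.1 * gAux q x kl.2
      = (-1:ℂ)^N * qAddPow q 1 1 (2*N+1) * x^(2*N+1) / (qFact q (2*N+1) : ℂ) := by
    intro N
    rw [Finset.Nat.sum_antidiagonal_eq_sum_range_succ_mk]
    have hrefl := Finset.sum_range_reflect
      (fun i => fAux q x i * gAux q x (2*N+1 - i)) (2*N+1+1)
    simp only [Nat.add_sub_cancel] at hrefl
    have key : ∀ i ∈ Finset.range (2*N+1+1),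
        fAux q x i * gAux q x (2*N+1 - i)
          + fAux q x (2*N+1 - i) * gAux q x (2*N+1 - (2*N+1 - i))
        = (-1:ℂ)^N * (qBinom q (2*N+1) i : ℂ) * x^(2*N+1) / (qFact q (2*N+1) : ℂ) := by
      intro i hi
      simp only [Finset.mem_range] at hi
      have hi' : i ≤ 2*N+1 := by omega
      have hnn : 2*N+1 - (2*N+1 - i) = i := by omega
      rcases Nat.even_or_odd i with he | ho
      · have he2 := Nat.even_iff.mp he
        have hne : ¬ Odd i := by rw [Nat.odd_iff]; omega
        have ho2 : Odd (2*N+1 - i) := by rw [Nat.odd_iff]; omega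
        have e1 : fAux q x i = 0 := by unfold fAux; rw [if_neg hne]
        have e2 : fAux q x (2*N+1 - i)
            = (-1:ℂ)^((2*N+1-i)/2) * x^(2*N+1-i) / (qFact q (2*N+1-i) : ℂ) := by
          unfold fAux; rw [if_pos ho2]
        have e3 : gAux q x (2*N+1 - (2*N+1 - i))
            = (-1:ℂ)^(i/2) * x^i / (qFact q i : ℂ) := by
          rw [hnn]; unfold gAux; rw [if_pos he]
        have hterm := term_eq hq0 hq1 x (show 2*N+1 - i ≤ 2*N+1 by omega) ho2
        rw [hnn] at hterm
        rw [e1, zero_mul, zero_add, e2, e3, hterm, qBinom_symm hi']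
      · have ho2 := Nat.odd_iff.mp ho
        have hne : ¬ Odd (2*N+1 - i) := by rw [Nat.odd_iff]; omega
        have hge : Even (2*N+1 - i) := by rw [Nat.even_iff]; omega
        have e1 : fAux q x (2*N+1 - i) = 0 := by unfold fAux; rw [if_neg hne]
        have e2 : fAux q x i = (-1:ℂ)^(i/2) * x^i / (qFact q i : ℂ) := by
          unfold fAux; rw [if_pos ho]
        have e3 : gAux q x (2*N+1 - i)
            = (-1:ℂ)^((2*N+1-i)/2) * x^(2*N+1-i) / (qFact q (2*N+1-i) : ℂ) := by
          unfold gAux; rw [if_pos hge]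
        rw [e1, zero_mul, add_zero, e2, e3]
        exact term_eq hq0 hq1 x hi' ho
    calc 2 * ∑ i ∈ Finset.range (2*N+1+1), fAux q x i * gAux q x (2*N+1 - i)
        = ∑ i ∈ Finset.range (2*N+1+1), (fAux q x i * gAux q x (2*N+1 - i)
            + fAux q x (2*N+1 - i) * gAux q x (2*N+1 - (2*N+1 - i))) := by
          rw [Finset.sum_add_distrib, hrefl]; ring
      _ = ∑ i ∈ Finset.range (2*N+1+1),
            (-1:ℂ)^N * (qBinom q (2*N+1) i : ℂ) * x^(2*N+1) / (qFact q (2*N+1) : ℂ) :=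
          Finset.sum_congr rfl key
      _ = (-1:ℂ)^N * qAddPow q 1 1 (2*N+1) * x^(2*N+1) / (qFact q (2*N+1) : ℂ) := by
          rw [qAddPow, Finset.mul_sum, Finset.sum_mul, Finset.sum_div]
          apply Finset.sum_congr rfl
          intro k _
          simp
  have hsupp2 : ∀ k ∉ Set.range (fun n : ℕ => 2*n+1),
      2 * ∑ kl ∈ Finset.HasAntidiagonal.antidiagonal k, fAux q x kl.1 * gAux q x kl.2 = 0 := by
    intro k hk
    have hek : Even k := by
      rcases Nat.even_or_odd k with he | ho
      · exact he
      · obtain ⟨m, hm⟩ := ho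
        exact absurd ⟨m, show 2 * m + 1 = k by omega⟩ hk
    rw [hFeven k hek, mul_zero]
  have h2F : Summable (fun k => 2 * ∑ kl ∈ Finset.HasAntidiagonal.antidiagonal k, fAux q x kl.1 * gAux q x kl.2) :=
    hFsummable.mul_left 2
  have hTsummable : Summable ((fun k => 2 * ∑ kl ∈ Finset.HasAntidiagonal.antidiagonal k,
      fAux q x kl.1 * gAux q x kl.2) ∘ (fun n : ℕ => 2*n+1)) :=
    (odd_inj.summable_iff hsupp2).mpr h2F
  have htsum : ∑' N : ℕ, 2 * ∑ kl ∈ Finset.HasAntidiagonal.antidiagonal (2*N+1), fAux q x kl.1 * gAux q x kl.2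
      = ∑' k, 2 * ∑ kl ∈ Finset.HasAntidiagonal.antidiagonal k, fAux q x kl.1 * gAux q x kl.2 :=
    odd_inj.tsum_eq (Function.support_subset_iff'.mpr hsupp2)
  have hfinal : (∑' N : ℕ, 2 * ∑ kl ∈ Finset.HasAntidiagonal.antidiagonal (2*N+1), fAux q x kl.1 * gAux q x kl.2)
      = 2 * qSin q x * qCos q x := by
    rw [htsum, tsum_mul_left, ← hprod]
    ring
  have hmain : HasSum (fun N : ℕ => 2 * ∑ kl ∈ Finset.HasAntidiagonal.antidiagonal (2*N+1),
      fAux q x kl.1 * gAux q x kl.2) (2 * qSin q x * qCos q x) :=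
    (hTsummable.hasSum_iff).mpr hfinal
  have hfun : (fun n : ℕ =>
        (-1 : ℂ) ^ n * qAddPow q 1 1 (2 * n + 1) * x ^ (2 * n + 1) / (qFact q (2 * n + 1) : ℂ))
      = fun N : ℕ => 2 * ∑ kl ∈ Finset.HasAntidiagonal.antidiagonal (2*N+1), fAux q x kl.1 * gAux q x kl.2 :=
    funext fun N => (hFodd N).symm
  rw [hfun]
  exact hmain
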